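/- Let $X$ be a compact metric space and $f:X\to X$ a continuous map. If $f$ is chain mixing and has the shadowing property, then $f$ has the asymptotic average shadowing property: for every sequence $(x_i)_{i\ge0}$ in $X$ with $\lim_{n\to\infty}\frac{1}{n}\sum_{i=0}^{n-1}d(f(x_i),x_{i+1})=0$, there exists $x\in X$ with $\lim_{n\to\infty}\frac{1}{n}\sum_{i=0}^{n-1}d(f^i(x),x_i)=0$. -/

import Mathlib

open Filter Metric Set
open scoped Classical Topology

noncomputable def upperDensity (A : Set ℕ) : ℝ :=
  Filter.limsup
    (fun n : ℕ => (((Finset.range n).filter (fun i => i ∈ A)).card : ℝ) / n) Filter.atTop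

def HasDensityOne (A : Set ℕ) : Prop :=
  Filter.Tendsto
    (fun n : ℕ => (((Finset.range n).filter (fun i => i ∈ A)).card : ℝ) / n) Filter.atTop (nhds 1)

def omegaBarSeq {X : Type*} [MetricSpace X] (x : ℕ → X) : Set X :=
  {y | ∀ ε > 0, 0 < upperDensity {i | dist (x i) y < ε}}

def omegaBar {X : Type*} [MetricSpace X] (f : X → X) (x : X) : Set X :=
  omegaBarSeq (fun i => f^[i] x)

lemma lemA {X : Type*} [MetricSpace X] [CompactSpace X] (f : X → X) (hf : Continuous f)
    (hcm : ∀ x y : X, ∀ δ > 0, ∃ N : ℕ, ∀ k ≥ N,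
      ∃ c : ℕ → X, c 0 = x ∧ c k = y ∧ ∀ i < k, dist (f (c i)) (c (i + 1)) ≤ δ)
    (δ : ℝ) (hδ : 0 < δ) :
    ∃ N : ℕ, 1 ≤ N ∧ ∀ u v : X, ∀ k : ℕ, ∃ c : ℕ → X, N ≤ k →
      (c 0 = u ∧ c k = v ∧ ∀ i < k, dist (f (c i)) (c (i + 1)) ≤ δ) := by
  -- uniform continuity modulus
  obtain ⟨η, hη0, hηf⟩ := Metric.uniformContinuous_iff.1
    (CompactSpace.uniformContinuous_of_continuous hf) (δ/3) (by linarith)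
  set η' : ℝ := min η (δ/3) with hη'
  have hη'0 : 0 < η' := lt_min hη0 (by linarith)
  -- finite net
  have htb : TotallyBounded (univ : Set X) := isCompact_univ.totallyBounded
  obtain ⟨s, hsfin, hscov⟩ := (Metric.totallyBounded_iff).1 htb η' hη'0
  -- chain times for pairs of net points
  have hpair : ∀ p q : X, ∃ N : ℕ, ∀ k ≥ N,
      ∃ c : ℕ → X, c 0 = p ∧ c k = q ∧ ∀ i < k, dist (f (c i)) (c (i + 1)) ≤ δ/3 :=
    fun p q => hcm p q (δ/3) (by linarith)
  choose N0 hN0 using hpair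
  set t := hsfin.toFinset
  set N : ℕ := 1 + (t ×ˢ t).sup (fun pq => N0 pq.1 pq.2) with hN
  refine ⟨N, Nat.le_add_right 1 _, fun u v k => ?_⟩
  -- pick net points near u, v
  by_cases hk : N ≤ k
  swap
  · exact ⟨fun _ => u, fun h => absurd h hk⟩
  have hu : ∃ p ∈ s, dist u p < η' := by
    have := hscov (mem_univ u)
    simp only [mem_iUnion, mem_ball] at this
    obtain ⟨p, hp, hdp⟩ := this
    exact ⟨p, hp, hdp⟩
  have hv : ∃ q ∈ s, dist v q < η' := by
    have := hscov (mem_univ v)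
    simp only [mem_iUnion, mem_ball] at this
    obtain ⟨q, hq, hdq⟩ := this
    exact ⟨q, hq, hdq⟩
  obtain ⟨p, hps, hup⟩ := hu
  obtain ⟨q, hqs, hvq⟩ := hv
  have hkN0 : N0 p q ≤ k := by
    have : N0 p q ≤ (t ×ˢ t).sup (fun pq => N0 pq.1 pq.2) := by
      apply Finset.le_sup (f := fun pq => N0 pq.1 pq.2) (b := (p,q))
      simp [t, Finset.mem_product, hsfin.mem_toFinset, hps, hqs]
    omega
  obtain ⟨c, hc0, hck, hcc⟩ := hN0 p q k hkN0
  have hk1 : 1 ≤ k := le_trans (Nat.le_add_right 1 _) hk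
  -- modify endpoints
  set c' : ℕ → X := fun i => if i = 0 then u else if i = k then v else c i with hc'
  refine ⟨c', fun _ => ⟨by simp [c'], ?_, ?_⟩⟩
  · have hk0 : ¬ (k = 0) := by omega
    simp [c', hk0]
  · intro i hi
    have hfu : dist (f u) (f p) ≤ δ/3 := by
      have : dist u p < η := lt_of_lt_of_le hup (min_le_left _ _)
      exact le_of_lt (hηf this)
    rcases Nat.eq_or_lt_of_le hk1 with h1 | h2
    · -- k = 1, so i = 0
      have hk1' : k = 1 := h1.symm
      have hi0 : i = 0 := by omega
      subst hi0
      have : dist (f (c 0)) (c 1) ≤ δ/3 := hcc 0 (by omega)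
      rw [hc0] at this
      have hc'0 : c' 0 = u := by simp [c']
      have hc'1 : c' 1 = v := by simp [c', hk1']
      rw [hc'0, hc'1]
      have hq' : dist q v ≤ δ/3 := by
        rw [dist_comm]; exact le_of_lt (lt_of_lt_of_le hvq (min_le_right _ _))
      have hck' : c 1 = q := by rw [← hk1']; exact hck
      calc dist (f u) v ≤ dist (f u) (f p) + dist (f p) (c 1) + dist (c 1) v := dist_triangle4 _ _ _ _
        _ ≤ δ/3 + δ/3 + δ/3 := by
            refine add_le_add (add_le_add hfu this) ?_
            rw [hck']; exact hq'
        _ = δ := by ring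
    · -- k ≥ 2
      by_cases h0 : i = 0
      · subst h0
        have hc'0 : c' 0 = u := by simp [c']
        have hc'1 : c' 1 = c 1 := by
          simp only [c']; rw [if_neg one_ne_zero, if_neg (by omega)]
        rw [hc'0, hc'1]
        have : dist (f p) (c 1) ≤ δ/3 := by
          have := hcc 0 (by omega)
          rwa [hc0] at this
        calc dist (f u) (c 1) ≤ dist (f u) (f p) + dist (f p) (c 1) := dist_triangle _ _ _
          _ ≤ δ/3 + δ/3 := add_le_add hfu this
          _ ≤ δ := by linarith
      · by_cases hik : i = k - 1
        · subst hik
          have hc'i : c' (k-1) = c (k-1) := by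
            simp only [c']; rw [if_neg h0, if_neg (by omega)]
          have hc'k : c' (k - 1 + 1) = v := by
            simp only [c']; rw [if_neg (by omega), if_pos (by omega)]
          rw [hc'i, hc'k]
          have h1 : dist (f (c (k-1))) (c k) ≤ δ/3 := by
            have := hcc (k-1) (by omega)
            rwa [(by omega : k - 1 + 1 = k)] at this
          have hq' : dist q v ≤ δ/3 := by
            rw [dist_comm]; exact le_of_lt (lt_of_lt_of_le hvq (min_le_right _ _))
          calc dist (f (c (k-1))) v ≤ dist (f (c (k-1))) (c k) + dist (c k) v := dist_triangle _ _ _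
            _ ≤ δ/3 + δ/3 := add_le_add h1 (by rw [hck]; exact hq')
            _ ≤ δ := by linarith
        · have hc'i : c' i = c i := by
            simp only [c']; rw [if_neg h0, if_neg (by omega)]
          have hc'i1 : c' (i+1) = c (i+1) := by
            simp only [c']; rw [if_neg (by omega), if_neg (by omega)]
          rw [hc'i, hc'i1]
          exact le_trans (hcc i hi) (by linarith)



lemma lemB {X : Type*} [MetricSpace X] (f : X → X) (x : ℕ → X)
    (δ : ℝ) (N : ℕ) (hN1 : 1 ≤ N)
    (C : X → X → ℕ → ℕ → X)
    (hC : ∀ u v k, N ≤ k → (C u v k 0 = u ∧ C u v k k = v ∧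
      ∀ i < k, dist (f (C u v k i)) (C u v k (i + 1)) ≤ δ))
    (hinf : ∀ i, ∃ m, i < m ∧ ¬ (∃ j, δ < dist (f (x j)) (x (j+1)) ∧ j < m ∧ m ≤ j + N)) :
    ∃ y : ℕ → X, (∀ i, dist (f (y i)) (y (i + 1)) ≤ δ) ∧
      ∀ i, ¬ (∃ j, δ < dist (f (x j)) (x (j+1)) ∧ j < i ∧ i ≤ j + N) → y i = x i := by
  set E : ℕ → Prop := fun i => ∃ j, δ < dist (f (x j)) (x (j+1)) ∧ j < i ∧ i ≤ j + N with hE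
  have hE0 : ¬ E 0 := by rintro ⟨j, -, hj, -⟩; omega
  -- a i : greatest non-E index ≤ i   b i : least non-E index > i
  set a : ℕ → ℕ := fun i => Nat.findGreatest (fun m => ¬ E m) i with ha
  have hb' : ∀ i : ℕ, ∃ m, i < m ∧ ¬ E m := hinf
  set b : ℕ → ℕ := fun i => Nat.find (hb' i) with hbdef
  have haE : ∀ i, ¬ E (a i) := fun i => Nat.findGreatest_spec (P := fun m => ¬ E m) (Nat.zero_le i) hE0
  have hale : ∀ i, a i ≤ i := fun i => Nat.findGreatest_le i
  have hbgt : ∀ i, i < b i := fun i => (Nat.find_spec (hb' i)).1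
  have hbE : ∀ i, ¬ E (b i) := fun i => (Nat.find_spec (hb' i)).2
  -- key interval facts for i ∈ E
  have hkey : ∀ i, E i → a i < i ∧ i < b i ∧ a i + N < b i := by
    intro i hi
    obtain ⟨j, hjB, hji, hijN⟩ := id hi
    have hai : a i < i := lt_of_le_of_ne (hale i) (fun h => haE i (by rw [h]; exact hi))
    refine ⟨hai, hbgt i, ?_⟩
    -- a i ≤ j and b i ≥ j + N + 1
    have haj : a i ≤ j := by
      by_contra h
      push_neg at h
      have : E (a i) := ⟨j, hjB, h, le_trans (hale i) hijN⟩
      exact haE i this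
    have hbj : j + N < b i := by
      by_contra h
      push_neg at h
      have : E (b i) := ⟨j, hjB, hji.trans (hbgt i), h⟩
      exact hbE i this
    omega
  -- chain length availability
  have hlen : ∀ i, E i → N ≤ b i - a i := fun i hi => by have := (hkey i hi); omega
  -- successor consistency
  have hasucc : ∀ i, E (i+1) → E i → a (i+1) = a i := by
    intro i h1 h2
    simp only [ha, Nat.findGreatest_succ]
    rw [if_neg (by simpa using h1)]
  have haset : ∀ i, ¬ E i → a i = i := by
    intro i hi
    exact le_antisymm (hale i) (Nat.le_findGreatest (le_refl i) hi)
  have hasucc' : ∀ i, E (i+1) → ¬ E i → a (i+1) = i := by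
    intro i h1 h2
    simp only [ha, Nat.findGreatest_succ]
    rw [if_neg (by simpa using h1)]
    exact haset i h2
  have hbsucc : ∀ i, E (i+1) → b (i+1) = b i := by
    intro i h1
    apply le_antisymm
    · apply Nat.find_min'
      refine ⟨?_, hbE i⟩
      have := hbgt i
      rcases Nat.lt_or_ge (i+1) (b i) with h | h
      · exact h
      · exfalso
        have : b i = i + 1 := by omega
        exact (hbE i) (this ▸ h1)
    · apply Nat.find_min'
      exact ⟨lt_trans (Nat.lt_succ_self i) (hbgt (i+1)), hbE (i+1)⟩
  have hbsucc' : ∀ i, E i → ¬ E (i+1) → b i = i + 1 := by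
    intro i h1 h2
    have h3 : b i ≤ i + 1 := Nat.find_min' _ ⟨Nat.lt_succ_self i, h2⟩
    have := hbgt i
    omega
  -- define y
  set y : ℕ → X := fun i => if E i then C (x (a i)) (x (b i)) (b i - a i) (i - a i) else x i with hy
  refine ⟨y, ?_, fun i hi => by simp only [hy]; rw [if_neg hi]⟩
  intro i
  by_cases h1 : E i
  · have hc := hC (x (a i)) (x (b i)) (b i - a i) (hlen i h1)
    by_cases h2 : E (i+1)
    · -- same interval
      have e1 : a (i+1) = a i := hasucc i h2 h1
      have e2 : b (i+1) = b i := hbsucc i h2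
      have hyi : y i = C (x (a i)) (x (b i)) (b i - a i) (i - a i) := by
        simp only [hy]; rw [if_pos h1]
      have hyi1 : y (i+1) = C (x (a i)) (x (b i)) (b i - a i) ((i - a i) + 1) := by
        simp only [hy]; rw [if_pos h2, e1, e2]
        congr 1
        have := (hkey i h1).1
        omega
      rw [hyi, hyi1]
      apply hc.2.2
      have := hkey i h1
      omega
    · -- end of interval: b i = i + 1
      have e2 : b i = i + 1 := hbsucc' i h1 h2
      have hyi : y i = C (x (a i)) (x (b i)) (b i - a i) (i - a i) := by
        simp only [hy]; rw [if_pos h1]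
      have hyi1 : y (i+1) = x (b i) := by
        simp only [hy]; rw [if_neg h2, e2]
      rw [hyi, hyi1]
      have harith : i - a i + 1 = b i - a i := by
        have := (hkey i h1).1; omega
      have hthis := hc.2.2 (i - a i) (by have := hkey i h1; omega)
      rw [harith] at hthis
      rw [hc.2.1] at hthis
      exact hthis
  · by_cases h2 : E (i+1)
    · -- start of interval: a (i+1) = i
      have e1 : a (i+1) = i := hasucc' i h2 h1
      have hc := hC (x (a (i+1))) (x (b (i+1))) (b (i+1) - a (i+1)) (hlen (i+1) h2)
      have hyi : y i = x i := by simp only [hy]; rw [if_neg h1]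
      have hyi1 : y (i+1) = C (x (a (i+1))) (x (b (i+1))) (b (i+1) - a (i+1)) 1 := by
        simp only [hy]; rw [if_pos h2]
        congr 1
        omega
      rw [hyi, hyi1, e1]
      have h0 := hc.1
      have hthis := hc.2.2 0 (by have := hkey (i+1) h2; omega)
      rw [h0, e1] at hthis
      exact hthis
    · -- genuine: i not bad
      have hyi : y i = x i := by simp only [hy]; rw [if_neg h1]
      have hyi1 : y (i+1) = x (i+1) := by simp only [hy]; rw [if_neg h2]
      rw [hyi, hyi1]
      by_contra h
      push_neg at h
      exact h2 ⟨i, h, Nat.lt_succ_self i, by omega⟩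



lemma lemDen {X : Type*} [MetricSpace X] (f : X → X) (x : ℕ → X)
    (hx : Filter.Tendsto (fun n : ℕ => (∑ i ∈ Finset.range n, dist (f (x i)) (x (i + 1))) / n)
        Filter.atTop (nhds 0))
    (δ : ℝ) (hδ0 : 0 < δ) (N : ℕ) (hN1 : 1 ≤ N) :
    ∀ ζ : ℝ, 0 < ζ → ∃ T : ℕ, ∀ n ≥ T,
      (((Finset.range n).filter
        (fun i => ∃ j, δ < dist (f (x j)) (x (j+1)) ∧ j < i ∧ i ≤ j + N)).card : ℝ) ≤ ζ * n := by
  intro ζ hζ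
  set err : ℕ → ℝ := fun i => dist (f (x i)) (x (i+1)) with herr
  set B : ℕ → Prop := fun i => δ < err i with hB
  set E : ℕ → Prop := fun i => ∃ j, B j ∧ j < i ∧ i ≤ j + N with hE
  have hBcard : ∀ n, (((Finset.range n).filter B).card : ℝ) * δ ≤ ∑ i ∈ Finset.range n, err i := by
    intro n
    have h1 : (((Finset.range n).filter B).card : ℝ) * δ = ∑ _i ∈ (Finset.range n).filter B, δ := by
      rw [Finset.sum_const, nsmul_eq_mul]
    rw [h1]
    calc ∑ i ∈ (Finset.range n).filter B, δ ≤ ∑ i ∈ (Finset.range n).filter B, err i :=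
          Finset.sum_le_sum (fun i hi => le_of_lt (Finset.mem_filter.1 hi).2)
      _ ≤ ∑ i ∈ Finset.range n, err i :=
          Finset.sum_le_sum_of_subset_of_nonneg (Finset.filter_subset _ _)
            (fun i _ _ => dist_nonneg)
  have hEcard : ∀ n, ((Finset.range n).filter E).card ≤ N * ((Finset.range n).filter B).card := by
    intro n
    have := Finset.card_le_card_of_injOn
      (f := fun i => (if h : E i then (h.choose, i - h.choose - 1) else (0,0)))
      (s := (Finset.range n).filter E)
      (t := ((Finset.range n).filter B) ×ˢ Finset.range N) ?_ ?_
    · calc ((Finset.range n).filter E).card ≤ _ := this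
        _ = ((Finset.range n).filter B).card * N := by rw [Finset.card_product, Finset.card_range]
        _ = N * ((Finset.range n).filter B).card := Nat.mul_comm _ _
    · intro i hi
      obtain ⟨hin, hiE⟩ := Finset.mem_filter.1 hi
      simp only [dif_pos hiE]
      obtain ⟨hjB, hji, hijN⟩ := hiE.choose_spec
      refine Finset.mem_product.2 ⟨Finset.mem_filter.2 ⟨?_, hjB⟩, ?_⟩
      · exact Finset.mem_range.2 (lt_trans hji (Finset.mem_range.1 hin))
      · exact Finset.mem_range.2 (by omega)
    · intro i hi i' hi' hee
      obtain ⟨-, hiE⟩ := Finset.mem_filter.1 hi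
      obtain ⟨-, hiE'⟩ := Finset.mem_filter.1 hi'
      simp only [dif_pos hiE, dif_pos hiE'] at hee
      obtain ⟨-, hji, -⟩ := hiE.choose_spec
      obtain ⟨-, hji', -⟩ := hiE'.choose_spec
      have h1 : hiE.choose = hiE'.choose := (Prod.mk.injEq _ _ _ _ ▸ hee).1
      have h2 : i - hiE.choose - 1 = i' - hiE'.choose - 1 := (Prod.mk.injEq _ _ _ _ ▸ hee).2
      omega
  -- from Cesàro convergence
  have hq : (0:ℝ) < ζ * δ / N := by positivity
  obtain ⟨T, hT⟩ := (Metric.tendsto_atTop.1 hx) (ζ * δ / N) hq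
  refine ⟨T, fun n hn => ?_⟩
  have hTn := hT n hn
  rw [Real.dist_eq, sub_zero] at hTn
  have hsum0 : 0 ≤ ∑ i ∈ Finset.range n, err i :=
    Finset.sum_nonneg (fun i _ => dist_nonneg)
  have habs : (∑ i ∈ Finset.range n, err i) / n < ζ * δ / N := by
    rwa [abs_of_nonneg (by positivity)] at hTn
  have hsumlt : (∑ i ∈ Finset.range n, err i) ≤ (ζ * δ / N) * n := by
    rcases Nat.eq_zero_or_pos n with rfl | hn0
    · simp
    · have hnpos : (0:ℝ) < n := by exact_mod_cast hn0
      rw [div_lt_iff₀ hnpos] at habs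
      linarith
  have h1 : (((Finset.range n).filter E).card : ℝ) ≤ N * ((Finset.range n).filter B).card := by
    exact_mod_cast hEcard n
  have h2 : (((Finset.range n).filter B).card : ℝ) ≤ (∑ i ∈ Finset.range n, err i) / δ := by
    rw [le_div_iff₀ hδ0]; exact hBcard n
  have hNpos : (0:ℝ) < N := by exact_mod_cast hN1
  calc (((Finset.range n).filter E).card : ℝ)
      ≤ N * ((Finset.range n).filter B).card := h1
    _ ≤ N * ((∑ i ∈ Finset.range n, err i) / δ) := by
        exact mul_le_mul_of_nonneg_left h2 (le_of_lt hNpos)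
    _ ≤ N * (((ζ * δ / N) * n) / δ) := by
        apply mul_le_mul_of_nonneg_left _ (le_of_lt hNpos)
        gcongr
    _ = ζ * n := by field_simp
  done



lemma lemInf (E : ℕ → Prop)
    (hEden : ∀ ζ : ℝ, 0 < ζ → ∃ T : ℕ, ∀ n ≥ T,
      (((Finset.range n).filter (fun i => E i)).card : ℝ) ≤ ζ * n) :
    ∀ i, ∃ j, i < j ∧ ¬ E j := by
  intro i
  by_contra h
  push_neg at h
  obtain ⟨T, hT⟩ := hEden (1/2) (by norm_num)
  set n := max T (2*i + 4) with hn
  have hnT : n ≥ T := le_max_left _ _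
  have hni : 2*i + 4 ≤ n := le_max_right _ _
  have hsub : Finset.Ico (i+1) n ⊆ (Finset.range n).filter (fun j => E j) := by
    intro j hj
    obtain ⟨h1, h2⟩ := Finset.mem_Ico.1 hj
    exact Finset.mem_filter.2 ⟨Finset.mem_range.2 h2, h (j) (by omega)⟩
  have hc : n - (i+1) ≤ ((Finset.range n).filter (fun j => E j)).card := by
    calc n - (i+1) = (Finset.Ico (i+1) n).card := (Nat.card_Ico _ _).symm
      _ ≤ _ := Finset.card_le_card hsub
  have hc' : ((n:ℝ) - (i+1)) ≤ ((Finset.range n).filter (fun j => E j)).card := by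
    have : ((n - (i+1) : ℕ) : ℝ) ≤ _ := Nat.cast_le.2 hc
    calc ((n:ℝ) - (i+1)) ≤ ((n - (i+1) : ℕ) : ℝ) := by
          rcases le_or_gt (i+1) n with hle | hlt
          · rw [Nat.cast_sub hle]; push_cast; ring_nf; exact le_refl _
          · have : (n:ℝ) < i+1 := by exact_mod_cast hlt
            have h0 : ((n - (i+1) : ℕ) : ℝ) ≥ 0 := Nat.cast_nonneg _
            linarith
      _ ≤ _ := this
  have hhalf := hT n hnT
  have : (n:ℝ) ≥ 2*i + 4 := by exact_mod_cast hni
  linarith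



lemma lemStep {X : Type*} [MetricSpace X] (f : X → X) (x : ℕ → X)
    (εm δm : ℝ) (hδm : 0 ≤ δm) (Nm : ℕ) (hN1 : 1 ≤ Nm)
    (C : X → X → ℕ → ℕ → X)
    (hC : ∀ u v k, Nm ≤ k → (C u v k 0 = u ∧ C u v k k = v ∧
      ∀ i < k, dist (f (C u v k i)) (C u v k (i + 1)) ≤ δm))
    (hδ : ∀ w : ℕ → X, (∀ i, dist (f (w i)) (w (i+1)) ≤ δm) →
      ∃ z : X, ∀ i, dist (f^[i] z) (w i) ≤ εm)
    (y : ℕ → X) (hy1 : ∀ i, dist (f (y i)) (y (i + 1)) ≤ δm)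
    (E : ℕ → Prop) (hy2 : ∀ i, ¬ E i → y i = x i)
    (w : X) (tt : ℕ) :
    ∃ z : X, (∀ i, i < tt → dist (f^[i] z) (f^[i] w) ≤ εm) ∧
      (∀ i, tt + Nm < i → ¬ E i → dist (f^[i] z) (x i) ≤ εm) := by
  set c : ℕ → X := C (f^[tt] w) (y (tt + Nm)) Nm with hc
  have hcc := hC (f^[tt] w) (y (tt + Nm)) Nm (le_refl _)
  set Y : ℕ → X := fun i => if i < tt then f^[i] w
    else if i ≤ tt + Nm then c (i - tt) else y i with hY
  have hYorb : ∀ i, i < tt → Y i = f^[i] w := fun i hi => by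
    simp only [hY]; rw [if_pos hi]
  have hYorb' : ∀ i, i ≤ tt → Y i = f^[i] w := by
    intro i hi
    rcases Nat.lt_or_ge i tt with h | h
    · exact hYorb i h
    · have : i = tt := by omega
      subst this
      simp only [hY]
      rw [if_neg (by omega), if_pos (by omega), Nat.sub_self]
      exact hcc.1
  have hYchain : ∀ i, tt ≤ i → i ≤ tt + Nm → Y i = c (i - tt) := by
    intro i h1 h2
    rcases Nat.lt_or_ge i tt with h | h
    · omega
    · simp only [hY]; rw [if_neg (by omega), if_pos h2]
  have hYy : ∀ i, tt + Nm ≤ i → Y i = y i := by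
    intro i hi
    rcases Nat.eq_or_lt_of_le hi with h | h
    · rw [← h, hYchain _ (by omega) (by omega)]
      rw [Nat.add_sub_cancel_left]
      exact hcc.2.1
    · simp only [hY]; rw [if_neg (by omega), if_neg (by omega)]
  have hYerr : ∀ i, dist (f (Y i)) (Y (i+1)) ≤ δm := by
    intro i
    rcases Nat.lt_or_ge i tt with h | h
    · rw [hYorb i h, hYorb' (i+1) (by omega), Function.iterate_succ_apply', dist_self]
      exact hδm
    · rcases Nat.lt_or_ge i (tt + Nm) with h2 | h2
      · rw [hYchain i h (by omega), hYchain (i+1) (by omega) (by omega)]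
        have : i + 1 - tt = (i - tt) + 1 := by omega
        rw [this]
        exact hcc.2.2 (i - tt) (by omega)
      · rw [hYy i h2, hYy (i+1) (by omega)]
        exact hy1 i
  obtain ⟨z, hz⟩ := hδ Y hYerr
  refine ⟨z, fun i hi => ?_, fun i hi1 hi2 => ?_⟩
  · have := hz i; rwa [hYorb i hi] at this
  · have := hz i
    rwa [hYy i (by omega), hy2 i hi2] at this




theorem stmt18 {X : Type*} [MetricSpace X] [CompactSpace X] (f : X → X) (hf : Continuous f)
    (hcm : ∀ x y : X, ∀ δ > 0, ∃ N : ℕ, ∀ k ≥ N,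
      ∃ c : ℕ → X, c 0 = x ∧ c k = y ∧ ∀ i < k, dist (f (c i)) (c (i + 1)) ≤ δ)
    (hsh : ∀ ε > 0, ∃ δ > 0, ∀ x : ℕ → X,
      (∀ i : ℕ, dist (f (x i)) (x (i + 1)) ≤ δ) →
      ∃ z : X, ∀ i : ℕ, dist (f^[i] z) (x i) ≤ ε) :
    ∀ x : ℕ → X,
      Filter.Tendsto (fun n : ℕ => (∑ i ∈ Finset.range n, dist (f (x i)) (x (i + 1))) / n)
        Filter.atTop (nhds 0) →
      ∃ z : X, Filter.Tendsto (fun n : ℕ => (∑ i ∈ Finset.range n, dist (f^[i] z) (x i)) / n)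
        Filter.atTop (nhds 0) := by
  intro x hx
  -- diameter bound
  obtain ⟨D0, hD0⟩ := Metric.isBounded_iff.1 (isCompact_univ (X := X)).isBounded
  set D : ℝ := max D0 1 with hDdef
  have hD : ∀ a b : X, dist a b ≤ D :=
    fun a b => le_trans (hD0 (mem_univ a) (mem_univ b)) (le_max_left _ _)
  have hD1 : (1:ℝ) ≤ D := le_max_right _ _
  have hDpos : (0:ℝ) < D := lt_of_lt_of_le one_pos hD1
  -- scales
  set ε : ℕ → ℝ := fun m => (1/2)^m with hεdef
  have hε0 : ∀ m, 0 < ε m := fun m => by positivity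
  have hεhalf : ∀ m, ε m = 2 * ε (m+1) := fun m => by
    simp only [hεdef, pow_succ]; ring
  have hεmono : ∀ a b : ℕ, a ≤ b → ε b ≤ ε a := fun a b h => by
    simp only [hεdef]
    exact pow_le_pow_of_le_one (by norm_num) (by norm_num) h
  -- shadowing constants
  choose δ hδ0 hδ using fun m => hsh (ε m) (hε0 m)
  -- uniform chain mixing constants and chain functions
  choose N hN1 Cc hCc using fun m => lemA f hf hcm (δ m) (hδ0 m)
  -- exceptional sets
  have hEden : ∀ m : ℕ, ∀ ζ : ℝ, 0 < ζ → ∃ T : ℕ, ∀ n ≥ T,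
      (((Finset.range n).filter
        (fun i => ∃ j, δ m < dist (f (x j)) (x (j+1)) ∧ j < i ∧ i ≤ j + N m)).card : ℝ)
        ≤ ζ * n :=
    fun m => lemDen f x hx (δ m) (hδ0 m) (N m) (hN1 m)
  have hinf : ∀ m i, ∃ j, i < j ∧
      ¬ (∃ j', δ m < dist (f (x j')) (x (j'+1)) ∧ j' < j ∧ j ≤ j' + N m) :=
    fun m => lemInf _ (hEden m)
  -- repaired pseudo-orbits
  choose y hy1 hy2 using fun m => lemB f x (δ m) (N m) (hN1 m) (Cc m) (hCc m) (hinf m)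
  -- the step points
  have hstep : ∀ (m : ℕ) (w : X) (tt : ℕ), ∃ z : X,
      (∀ i, i < tt → dist (f^[i] z) (f^[i] w) ≤ ε m) ∧
      (∀ i, tt + N m < i →
        ¬ (∃ j, δ m < dist (f (x j)) (x (j+1)) ∧ j < i ∧ i ≤ j + N m) →
        dist (f^[i] z) (x i) ≤ ε m) :=
    fun m w tt => lemStep f x (ε m) (δ m) (hδ0 m).le (N m) (hN1 m) (Cc m) (hCc m) (hδ m)
      (y m) (hy1 m) _ (hy2 m) w tt
  -- density thresholds
  choose Tf hTf using fun (m k : ℕ) => hEden m ((1/2)^k) (by positivity)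
  -- block times
  obtain ⟨t, ht0, htsucc⟩ : ∃ t : ℕ → ℕ, t 0 = 0 ∧ ∀ m, t (m+1) =
      max (max (t m + 1) (2^(m+1) * t m))
        (max (2^(m+1) * (N m + N (m+1) + 2)) (max (Tf m (m+1)) (Tf (m+1) (m+1)))) :=
    ⟨fun n => Nat.rec 0 (fun m tm =>
      max (max (tm + 1) (2^(m+1) * tm))
        (max (2^(m+1) * (N m + N (m+1) + 2)) (max (Tf m (m+1)) (Tf (m+1) (m+1))))) n,
      rfl, fun m => rfl⟩
  have htlt : ∀ m, t m < t (m+1) := fun m => by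
    rw [htsucc]
    calc t m < t m + 1 := Nat.lt_succ_self _
    _ ≤ _ := le_trans (le_max_left _ _) (le_max_left _ _)
  have htmono : StrictMono t := strictMono_nat_of_lt_succ htlt
  have htm : ∀ m, m ≤ t m := by
    intro m
    induction m with
    | zero => omega
    | succ m ih => have := htlt m; omega
  have htgrow : ∀ m, 2^(m+1) * t m ≤ t (m+1) := fun m => by
    rw [htsucc]; exact le_trans (le_max_right _ _) (le_max_left _ _)
  have htN : ∀ m, 2^(m+1) * (N m + N (m+1) + 2) ≤ t (m+1) := fun m => by
    rw [htsucc]; exact le_trans (le_max_left _ _) (le_max_right _ _)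
  have htT1 : ∀ m, Tf m (m+1) ≤ t (m+1) := fun m => by
    rw [htsucc]
    exact le_trans (le_trans (le_max_left _ _) (le_max_right _ _)) (le_max_right _ _)
  have htT2 : ∀ m, Tf (m+1) (m+1) ≤ t (m+1) := fun m => by
    rw [htsucc]
    exact le_trans (le_trans (le_max_right _ _) (le_max_right _ _)) (le_max_right _ _)
  -- the recursively shadowed points
  choose zs hz1 hz2 using hstep
  obtain ⟨z, hzsucc⟩ : ∃ z : ℕ → X, ∀ M, z (M+1) = zs (M+1) (z M) (t (M+1)) :=
    ⟨fun M => Nat.rec (x 0) (fun M zM => zs (M+1) zM (t (M+1))) M, fun M => rfl⟩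
  -- accumulated tracking estimates
  have hQ : ∀ M m, 1 ≤ m → m ≤ M → ∀ i, t m + N m < i → i < t (m+1) →
      ¬ (∃ j, δ m < dist (f (x j)) (x (j+1)) ∧ j < i ∧ i ≤ j + N m) →
      dist (f^[i] (z M)) (x i) ≤ 2 * ε m - ε M := by
    intro M
    induction M with
    | zero => intro m h1 h2; omega
    | succ M ih =>
      intro m h1 h2 i hi1 hi2 hiE
      rcases Nat.eq_or_lt_of_le h2 with he | hlt
      · subst he
        rw [hzsucc M]
        have := hz2 (M+1) (z M) (t (M+1)) i hi1 hiE
        have hε := hε0 (M+1)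
        linarith
      · have hmM : m ≤ M := by omega
        have hi3 : i < t (M+1) := lt_of_lt_of_le hi2 (htmono.monotone (by omega : m+1 ≤ M+1))
        have ha := hz1 (M+1) (z M) (t (M+1)) i hi3
        rw [← hzsucc M] at ha
        have hb := ih m h1 hmM i hi1 hi2 hiE
        calc dist (f^[i] (z (M+1))) (x i)
            ≤ dist (f^[i] (z (M+1))) (f^[i] (z M)) + dist (f^[i] (z M)) (x i) :=
              dist_triangle _ _ _
          _ ≤ ε (M+1) + (2 * ε m - ε M) := add_le_add ha hb
          _ = 2 * ε m - ε (M+1) := by rw [hεhalf M]; ring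
  -- limit point
  set K : ℕ → Set X := fun M => {w | ∀ m, 1 ≤ m → m ≤ M → ∀ i, t m + N m < i →
      i < t (m+1) → ¬ (∃ j, δ m < dist (f (x j)) (x (j+1)) ∧ j < i ∧ i ≤ j + N m) →
      dist (f^[i] w) (x i) ≤ 2 * ε m} with hK
  have hKsub : ∀ M, K (M+1) ⊆ K M :=
    fun M w hw m h1 h2 i hi1 hi2 hiE => hw m h1 (by omega) i hi1 hi2 hiE
  have hKne : ∀ M, (K M).Nonempty := fun M =>
    ⟨z M, fun m h1 h2 i hi1 hi2 hiE =>
      le_trans (hQ M m h1 h2 i hi1 hi2 hiE) (by have := hε0 M; linarith)⟩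
  have hKclosed : ∀ M, IsClosed (K M) := by
    intro M
    have hKeq : K M = ⋂ (m : ℕ), ⋂ (i : ℕ), {w : X | 1 ≤ m → m ≤ M → t m + N m < i →
        i < t (m+1) → ¬ (∃ j, δ m < dist (f (x j)) (x (j+1)) ∧ j < i ∧ i ≤ j + N m) →
        dist (f^[i] w) (x i) ≤ 2 * ε m} := by
      ext w
      simp only [hK, mem_iInter, mem_setOf_eq]
      constructor
      · intro h m i h1 h2 h3 h4 h5; exact h m h1 h2 i h3 h4 h5
      · intro h m h1 h2 i h3 h4 h5; exact h m i h1 h2 h3 h4 h5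
    rw [hKeq]
    refine isClosed_iInter (fun m => isClosed_iInter (fun i => ?_))
    by_cases hcond : 1 ≤ m ∧ m ≤ M ∧ t m + N m < i ∧ i < t (m+1) ∧
        ¬ (∃ j, δ m < dist (f (x j)) (x (j+1)) ∧ j < i ∧ i ≤ j + N m)
    · obtain ⟨c1, c2, c3, c4, c5⟩ := hcond
      have : {w : X | 1 ≤ m → m ≤ M → t m + N m < i →
          i < t (m+1) → ¬ (∃ j, δ m < dist (f (x j)) (x (j+1)) ∧ j < i ∧ i ≤ j + N m) →
          dist (f^[i] w) (x i) ≤ 2 * ε m} = {w : X | dist (f^[i] w) (x i) ≤ 2 * ε m} := by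
        ext w
        simp only [mem_setOf_eq]
        constructor
        · intro h; exact h c1 c2 c3 c4 c5
        · intro h _ _ _ _ _; exact h
      rw [this]
      exact isClosed_le (((hf.iterate i).dist continuous_const)) continuous_const
    · have : {w : X | 1 ≤ m → m ≤ M → t m + N m < i →
          i < t (m+1) → ¬ (∃ j, δ m < dist (f (x j)) (x (j+1)) ∧ j < i ∧ i ≤ j + N m) →
          dist (f^[i] w) (x i) ≤ 2 * ε m} = univ := by
        apply eq_univ_of_forall
        intro w h1 h2 h3 h4 h5
        exact absurd ⟨h1, h2, h3, h4, h5⟩ hcond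
      rw [this]
      exact isClosed_univ
  obtain ⟨zf, hzfmem⟩ := IsCompact.nonempty_iInter_of_sequence_nonempty_isCompact_isClosed
    K hKsub hKne ((hKclosed 0).isCompact) hKclosed
  have hzf : ∀ m, 1 ≤ m → ∀ i, t m + N m < i → i < t (m+1) →
      ¬ (∃ j, δ m < dist (f (x j)) (x (j+1)) ∧ j < i ∧ i ≤ j + N m) →
      dist (f^[i] zf) (x i) ≤ 2 * ε m :=
    fun m h1 i hi1 hi2 hiE => (mem_iInter.1 hzfmem m) m h1 (le_refl m) i hi1 hi2 hiE
  -- the final estimate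
  refine ⟨zf, Metric.tendsto_atTop.2 ?_⟩
  intro κ hκ
  obtain ⟨m₁, hm₁⟩ := exists_pow_lt_of_lt_one
    (show (0:ℝ) < κ/(4+4*D) by positivity) (by norm_num : (1:ℝ)/2 < 1)
  set m₀ : ℕ := max m₁ 2 with hm₀def
  have hm₀2 : 2 ≤ m₀ := le_max_right _ _
  have h44D : (0:ℝ) < 4 + 4*D := by linarith
  have hm₀κ : (4+4*D) * (1/2)^m₀ < κ := by
    have h1 : ((1:ℝ)/2)^m₀ ≤ (1/2)^m₁ :=
      pow_le_pow_of_le_one (by norm_num) (by norm_num) (le_max_left _ _)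
    calc (4+4*D) * (1/2)^m₀ ≤ (4+4*D) * (1/2)^m₁ :=
          mul_le_mul_of_nonneg_left h1 h44D.le
      _ < (4+4*D) * (κ/(4+4*D)) := mul_lt_mul_of_pos_left hm₁ h44D
      _ = κ := by field_simp
  refine ⟨t m₀, fun n hn => ?_⟩
  -- locate n between block times
  set m : ℕ := Nat.findGreatest (fun j => t j ≤ n) n with hmdef
  have hm₀n : m₀ ≤ n := le_trans (htm m₀) hn
  have hm₀m : m₀ ≤ m := Nat.le_findGreatest hm₀n hn
  have htmn : t m ≤ n := Nat.findGreatest_spec (P := fun j => t j ≤ n) hm₀n hn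
  have hnlt : n < t (m+1) := by
    by_contra hcon
    push_neg at hcon
    have h1 : m + 1 ≤ n := le_trans (htm (m+1)) hcon
    exact (Nat.findGreatest_is_greatest (Nat.lt_succ_self m) h1) hcon
  have hm2 : 2 ≤ m := le_trans hm₀2 hm₀m
  obtain ⟨m', hmm'⟩ : ∃ m', m = m' + 1 := ⟨m - 1, by omega⟩
  have hm'1 : 1 ≤ m' := by omega
  have htm'm : t m' ≤ t m := (htmono.monotone (by omega : m' ≤ m))
  have htm'n : t m' ≤ n := le_trans htm'm htmn
  have hn1 : 1 ≤ n := by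
    have := htm m
    omega
  have hnpos : (0:ℝ) < n := by exact_mod_cast hn1
  -- tracking distances
  set d : ℕ → ℝ := fun i => dist (f^[i] zf) (x i) with hd
  have hd0 : ∀ i, 0 ≤ d i := fun i => dist_nonneg
  have hdD : ∀ i, d i ≤ D := fun i => hD _ _
  set Bad : ℕ → Prop := fun i =>
    (∃ j, δ m' < dist (f (x j)) (x (j+1)) ∧ j < i ∧ i ≤ j + N m') ∨
    (∃ j, δ m < dist (f (x j)) (x (j+1)) ∧ j < i ∧ i ≤ j + N m) ∨
    i ≤ t m' + N m' ∨ (t m ≤ i ∧ i ≤ t m + N m) with hBad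
  have hgood : ∀ i, t m' ≤ i → i < n → ¬ Bad i → d i ≤ 2 * ε m' := by
    intro i hi1 hi2 hbad
    simp only [hBad, not_or, not_and, not_le] at hbad
    obtain ⟨hb1, hb2, hb3, hb4⟩ := hbad
    rcases Nat.lt_or_ge i (t m) with h | h
    · have := hzf m' hm'1 i (by omega) (by rw [← hmm']; exact h) hb1
      exact this
    · have hi4 : t m + N m < i := hb4 h
      have := hzf m (by omega) i hi4 (lt_trans hi2 hnlt) hb2
      calc d i ≤ 2 * ε m := this
        _ ≤ 2 * ε m' := by have := hεmono m' m (by omega); linarith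
  -- split the sum
  have hsplit : ∑ i ∈ Finset.range n, d i
      = ∑ i ∈ Finset.range (t m'), d i + ∑ i ∈ Finset.Ico (t m') n, d i := by
    rw [Finset.range_eq_Ico, Finset.range_eq_Ico,
      Finset.sum_Ico_consecutive _ (Nat.zero_le _) htm'n]
  have hpart1 : ∑ i ∈ Finset.range (t m'), d i ≤ D * t m' := by
    calc ∑ i ∈ Finset.range (t m'), d i ≤ ∑ _i ∈ Finset.range (t m'), D :=
          Finset.sum_le_sum (fun i _ => hdD i)
      _ = D * t m' := by
          rw [Finset.sum_const, nsmul_eq_mul, Finset.card_range, mul_comm]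
  have hpart2 : ∑ i ∈ Finset.Ico (t m') n, d i
      ≤ 2 * ε m' * n + D * (((Finset.Ico (t m') n).filter Bad).card : ℝ) := by
    have hterm : ∀ i ∈ Finset.Ico (t m') n, d i ≤ 2 * ε m' + (if Bad i then D else 0) := by
      intro i hi
      obtain ⟨hge, hlt⟩ := Finset.mem_Ico.1 hi
      by_cases hb : Bad i
      · rw [if_pos hb]
        have := hdD i
        have := hε0 m'
        linarith
      · rw [if_neg hb]
        have := hgood i hge hlt hb
        linarith
    calc ∑ i ∈ Finset.Ico (t m') n, d i
        ≤ ∑ i ∈ Finset.Ico (t m') n, (2 * ε m' + (if Bad i then D else 0)) :=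
          Finset.sum_le_sum hterm
      _ = (Finset.Ico (t m') n).card * (2 * ε m')
          + ∑ i ∈ Finset.Ico (t m') n, (if Bad i then D else 0) := by
          rw [Finset.sum_add_distrib, Finset.sum_const, nsmul_eq_mul]
      _ ≤ 2 * ε m' * n + D * (((Finset.Ico (t m') n).filter Bad).card : ℝ) := by
          have hcardle : ((Finset.Ico (t m') n).card : ℝ) ≤ n := by
            rw [Nat.card_Ico]
            exact_mod_cast Nat.sub_le n (t m')
          have hsumif : ∑ i ∈ Finset.Ico (t m') n, (if Bad i then D else 0)
              = D * (((Finset.Ico (t m') n).filter Bad).card : ℝ) := by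
            rw [Finset.sum_ite, Finset.sum_const, Finset.sum_const_zero, add_zero,
              nsmul_eq_mul, mul_comm]
          rw [hsumif]
          have hε' := hε0 m'
          have h1 : ((Finset.Ico (t m') n).card : ℝ) * (2 * ε m') ≤ (n : ℝ) * (2 * ε m') :=
            mul_le_mul_of_nonneg_right hcardle (by linarith)
          linarith
  -- bound the bad count
  have hbadcard : (((Finset.Ico (t m') n).filter Bad).card : ℝ)
      ≤ (1/2)^m * n + (1/2)^m * n + ((N m' : ℝ) + 1) + ((N m : ℝ) + 1) := by
    have hsubset : (Finset.Ico (t m') n).filter Bad ⊆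
        (((Finset.range n).filter
          (fun i => ∃ j, δ m' < dist (f (x j)) (x (j+1)) ∧ j < i ∧ i ≤ j + N m')
          ∪ (Finset.range n).filter
          (fun i => ∃ j, δ m < dist (f (x j)) (x (j+1)) ∧ j < i ∧ i ≤ j + N m))
          ∪ Finset.Icc (t m') (t m' + N m')) ∪ Finset.Icc (t m) (t m + N m) := by
      intro i hi
      obtain ⟨hiIco, hiBad⟩ := Finset.mem_filter.1 hi
      obtain ⟨hge, hlt⟩ := Finset.mem_Ico.1 hiIco
      simp only [Finset.mem_union, Finset.mem_filter, Finset.mem_range, Finset.mem_Icc]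
      rcases hiBad with h | h | h | h
      · exact Or.inl (Or.inl (Or.inl ⟨hlt, h⟩))
      · exact Or.inl (Or.inl (Or.inr ⟨hlt, h⟩))
      · exact Or.inl (Or.inr ⟨hge, h⟩)
      · exact Or.inr h
    have hcard1 : (((Finset.range n).filter
        (fun i => ∃ j, δ m' < dist (f (x j)) (x (j+1)) ∧ j < i ∧ i ≤ j + N m')).card : ℝ)
        ≤ (1/2)^m * n := by
      apply hTf m' m n
      have := htT1 m'
      rw [← hmm'] at this
      omega
    have hcard2 : (((Finset.range n).filter
        (fun i => ∃ j, δ m < dist (f (x j)) (x (j+1)) ∧ j < i ∧ i ≤ j + N m)).card : ℝ)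
        ≤ (1/2)^m * n := by
      apply hTf m m n
      have := htT2 m'
      rw [← hmm'] at this
      omega
    have hcard3 : ((Finset.Icc (t m') (t m' + N m')).card : ℝ) = (N m' : ℝ) + 1 := by
      have h : (Finset.Icc (t m') (t m' + N m')).card = N m' + 1 := by rw [Nat.card_Icc]; omega
      rw [h]; push_cast; ring
    have hcard4 : ((Finset.Icc (t m) (t m + N m)).card : ℝ) = (N m : ℝ) + 1 := by
      have h : (Finset.Icc (t m) (t m + N m)).card = N m + 1 := by rw [Nat.card_Icc]; omega
      rw [h]; push_cast; ring
    have hnat : (((Finset.Ico (t m') n).filter Bad).card : ℝ)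
        ≤ (((Finset.range n).filter
          (fun i => ∃ j, δ m' < dist (f (x j)) (x (j+1)) ∧ j < i ∧ i ≤ j + N m')).card : ℝ)
          + (((Finset.range n).filter
          (fun i => ∃ j, δ m < dist (f (x j)) (x (j+1)) ∧ j < i ∧ i ≤ j + N m)).card : ℝ)
          + ((Finset.Icc (t m') (t m' + N m')).card : ℝ)
          + ((Finset.Icc (t m) (t m + N m)).card : ℝ) := by
      have h2 := (Finset.card_le_card hsubset).trans (Finset.card_union_le _ _)
      have h3 := h2.trans (add_le_add_left (Finset.card_union_le _ _) _)
      have h4 := h3.trans (add_le_add_left (add_le_add_left (Finset.card_union_le _ _) _) _)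
      exact_mod_cast h4
    rw [hcard3, hcard4] at hnat
    linarith
  -- numeric conversions
  have hpow2 : ((1:ℝ)/2)^m * (2:ℝ)^m = 1 := by
    rw [← mul_pow]; norm_num
  have hkey : ∀ a : ℝ, 0 ≤ a → (2:ℝ)^m * a ≤ n → a ≤ (1/2)^m * n := by
    intro a ha h
    have h2m : (0:ℝ) < (2:ℝ)^m := by positivity
    have : a = (1/2)^m * ((2:ℝ)^m * a) := by
      rw [← mul_assoc, hpow2, one_mul]
    rw [this]
    exact mul_le_mul_of_nonneg_left h (by positivity)
  have hgr : (2:ℝ)^m * t m' ≤ n := by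
    have := htgrow m'
    rw [← hmm'] at this
    have : (2^m * t m' : ℕ) ≤ n := le_trans this htmn
    exact_mod_cast this
  have htm'r : (t m' : ℝ) ≤ (1/2)^m * n := hkey _ (Nat.cast_nonneg _) hgr
  have hNr : ((N m' : ℝ) + (N m : ℝ) + 2) ≤ (1/2)^m * n := by
    apply hkey _ (by positivity)
    have h1 := htN m'
    rw [← hmm'] at h1
    have h2 : (2^m * (N m' + N m + 2) : ℕ) ≤ n := le_trans h1 htmn
    have h3 : ((2^m * (N m' + N m + 2) : ℕ) : ℝ) ≤ n := by exact_mod_cast h2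
    push_cast at h3
    linarith
  have hεm' : ε m' = 2 * (1/2)^m := by
    rw [hεhalf m', ← hmm']
  -- total bound
  have htotal : ∑ i ∈ Finset.range n, d i ≤ (4 + 4*D) * (1/2)^m * n := by
    have hpm : (0:ℝ) ≤ (1/2)^m := by positivity
    have c1 : ∑ i ∈ Finset.range (t m'), d i ≤ D * ((1/2)^m * n) :=
      le_trans hpart1 (mul_le_mul_of_nonneg_left htm'r hDpos.le)
    have c2 : 2 * ε m' * n = 4 * ((1/2)^m * n) := by
      rw [hεm']; ring
    have c3 : D * (((Finset.Ico (t m') n).filter Bad).card : ℝ)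
        ≤ D * ((1/2)^m * n + (1/2)^m * n + (1/2)^m * n) := by
      apply mul_le_mul_of_nonneg_left _ hDpos.le
      have := hbadcard
      linarith
    rw [hsplit]
    have := hpart2
    nlinarith [hnpos, hpm]
  -- conclude
  have havg : (∑ i ∈ Finset.range n, d i) / n ≤ (4 + 4*D) * (1/2)^m := by
    rw [div_le_iff₀ hnpos]
    exact htotal
  have hmon : ((4+4*D):ℝ) * (1/2)^m ≤ (4+4*D) * (1/2)^m₀ :=
    mul_le_mul_of_nonneg_left
      (pow_le_pow_of_le_one (by norm_num) (by norm_num) hm₀m) h44D.le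
  rw [Real.dist_eq, sub_zero, abs_of_nonneg]
  · calc (∑ i ∈ Finset.range n, d i) / n ≤ (4 + 4*D) * (1/2)^m := havg
      _ ≤ (4+4*D) * (1/2)^m₀ := hmon
      _ < κ := hm₀κ
  · apply div_nonneg _ hnpos.le
    exact Finset.sum_nonneg (fun i _ => hd0 i)
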